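/- In a multiplicative lattice L with 1 compact, c_z(ab) = c_z(a ∧ b) = c_z(a) ∧ c_z(b) for all a, b ∈ L, where c_z is the z-closure operator. -/
import Mathlib


/-- A multiplicative lattice: a complete lattice with an associative, commutative
multiplication distributing over arbitrary joins, with the top element as unit. -/
class MultiplicativeLattice (L : Type*) extends CompleteLattice L, CommMonoid L where
  mul_sSup : ∀ (a : L) (s : Set L), a * sSup s = ⨆ b ∈ s, a * b
  one_eq_top : (1 : L) = ⊤

variable {L : Type*} [MultiplicativeLattice L]

/-- A maximal element: proper, and anything properly above it up to (but not) ⊤ equals it. -/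
def IsMaxElt (m : L) : Prop := m ≠ ⊤ ∧ ∀ x : L, m ≤ x → x ≠ ⊤ → m = x

/-- The set of maximal elements above `a`. -/
def MSet (a : L) : Set L := {m | IsMaxElt m ∧ a ≤ m}

/-- A z-element: `M_a ⊇ M_b` and `b ≤ x` imply `a ≤ x`. -/
def IsZ (x : L) : Prop := ∀ a b : L, MSet b ⊆ MSet a → b ≤ x → a ≤ x

/-- The top element 1 = ⊤ is compact. -/
def OneCompact (L : Type*) [MultiplicativeLattice L] : Prop :=
  ∀ s : Set L, sSup s = ⊤ → ∃ t : Finset L, ↑t ⊆ s ∧ t.sup id = ⊤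

/-- The z-closure of an element: meet of all z-elements above it. -/
noncomputable def zCl (a : L) : L := sInf {z : L | IsZ z ∧ a ≤ z}

lemma my_mul_sup (a x y : L) : a * (x ⊔ y) = a * x ⊔ a * y := by
  rw [← sSup_pair, MultiplicativeLattice.mul_sSup]
  simp [iSup_or, iSup_sup_eq]

lemma my_mul_mono {a x y : L} (hxy : x ≤ y) : a * x ≤ a * y := by
  have : a * y = a * x ⊔ a * y := by rw [← my_mul_sup, sup_eq_right.mpr hxy]
  rw [this]; exact le_sup_left

lemma my_mul_le_left (a b : L) : a * b ≤ a := by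
  have := my_mul_mono (a := a) (le_top (a := b))
  calc a * b ≤ a * ⊤ := this
    _ = a * 1 := by rw [MultiplicativeLattice.one_eq_top]
    _ = a := mul_one a

lemma my_mul_le_inf (a b : L) : a * b ≤ a ⊓ b :=
  le_inf (my_mul_le_left a b) (by rw [mul_comm]; exact my_mul_le_left b a)

/-- Maximal elements are prime. -/
lemma my_max_prime {m a b : L} (hm : IsMaxElt m) (hab : a * b ≤ m) : a ≤ m ∨ b ≤ m := by
  by_cases ha : a ≤ m
  · exact Or.inl ha
  · right
    have htop : m ⊔ a = ⊤ := by
      by_contra hne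
      exact ha (le_of_le_of_eq le_sup_right (hm.2 (m ⊔ a) le_sup_left hne).symm)
    have hb : b = b * m ⊔ b * a := by
      calc b = b * 1 := (mul_one b).symm
        _ = b * ⊤ := by rw [MultiplicativeLattice.one_eq_top]
        _ = b * (m ⊔ a) := by rw [htop]
        _ = b * m ⊔ b * a := my_mul_sup b m a
    refine hb.le.trans (sup_le ?_ ?_)
    · rw [mul_comm]; exact (my_mul_le_left m b)
    · rw [mul_comm]; exact hab

lemma my_le_zCl (a : L) : a ≤ zCl a := le_sInf fun z hz => hz.2

lemma my_isZ_zCl (a : L) : IsZ (zCl a) := by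
  intro p q hsub hq
  exact le_sInf fun z hz => hz.1 p q hsub (hq.trans (sInf_le hz))

lemma my_zCl_le_of_MSet {x y : L} (hs : MSet y ⊆ MSet x) : zCl x ≤ zCl y :=
  sInf_le ⟨my_isZ_zCl y, (my_isZ_zCl y) x y hs (my_le_zCl y)⟩

lemma my_isZ_of_max {m : L} (hm : IsMaxElt m) : IsZ m := fun _ _ hsub hq =>
  (hsub ⟨hm, hq⟩).2

lemma my_zCl_le_of_max {a m : L} (hm : IsMaxElt m) (ham : a ≤ m) : zCl a ≤ m :=
  sInf_le ⟨my_isZ_of_max hm, ham⟩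

lemma my_MSet_mul_eq_inf (a b : L) : MSet (a * b) = MSet (a ⊓ b) := by
  ext m
  constructor
  · rintro ⟨hm, hab⟩
    refine ⟨hm, ?_⟩
    rcases my_max_prime hm hab with h | h
    · exact inf_le_left.trans h
    · exact inf_le_right.trans h
  · rintro ⟨hm, hab⟩
    exact ⟨hm, (my_mul_le_inf a b).trans hab⟩

theorem stmt14 (h : OneCompact L) (a b : L) :
    zCl (a * b) = zCl (a ⊓ b) ∧ zCl (a ⊓ b) = zCl a ⊓ zCl b := by
  constructor
  · exact le_antisymm (my_zCl_le_of_MSet (my_MSet_mul_eq_inf a b).ge)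
      (my_zCl_le_of_MSet (my_MSet_mul_eq_inf a b).le)
  · apply le_antisymm
    · refine le_inf (my_zCl_le_of_MSet ?_) (my_zCl_le_of_MSet ?_)
      · rintro m ⟨hm, ha⟩; exact ⟨hm, inf_le_left.trans ha⟩
      · rintro m ⟨hm, hb⟩; exact ⟨hm, inf_le_right.trans hb⟩
    · refine my_isZ_zCl (a ⊓ b) (zCl a ⊓ zCl b) (a ⊓ b) ?_ (my_le_zCl (a ⊓ b))
      rintro m ⟨hm, hab⟩
      refine ⟨hm, ?_⟩
      rcases my_max_prime hm ((my_mul_le_inf a b).trans hab) with hle | hle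
      · exact inf_le_left.trans (my_zCl_le_of_max hm hle)
      · exact inf_le_right.trans (my_zCl_le_of_max hm hle)
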